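/- In the pre-extension setting, the obstruction component α(x,y,z) = φ_x(g(y,z)) − g(xy,z) + g(x,yz) − ψ_z(g(x,y)) belongs to the bicenter K_A for all x, y, z ∈ R, i.e. α(x,y,z)·b = 0 = b·α(x,y,z) for all b ∈ A. -/
import Mathlib


variable {R A : Type*}

/-- The bicenter `K_A = {c ∈ A : c·a = 0 = a·c for all a}`. -/
def bicenter (A : Type*) [NonUnitalRing A] : Set A :=
  {c | ∀ b : A, c * b = 0 ∧ b * c = 0}

/-- A pre-extension datum `(φ, ψ, f, g)` of the ring `A` by the ring `R`:
`φ_x, ψ_x ∈ End_ℤ(A)` and `f, g : R² → A` satisfying the relations (10) and the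
defining relations of the factor sets. -/
def IsPreExtension [Ring R] [NonUnitalRing A]
    (φ ψ : R → AddMonoid.End A) (f g : R → R → A) : Prop :=
  (∀ a : A, φ 1 a = a) ∧
  (∀ a : A, ψ 1 a = a) ∧
  (∀ (x : R) (a b : A), a * φ x b = ψ x a * b) ∧
  (∀ (x : R) (a b : A), φ x (a * b) = φ x a * b) ∧
  (∀ (x : R) (a b : A), ψ x (b * a) = b * ψ x a) ∧
  (∀ (x : R) (a b : A), ψ x b * a = b * φ x a) ∧
  (∀ (x y : R) (a : A), φ x (ψ y a) = ψ y (φ x a)) ∧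
  (∀ (x y : R) (a : A), φ x (φ y a) = φ (x * y) a + g x y * a) ∧
  (∀ (x y : R) (a : A), ψ y (ψ x a) = ψ (x * y) a + a * g x y) ∧
  (∀ (x y : R) (a : A), φ x a + φ y a = φ (x + y) a + f x y * a) ∧
  (∀ (x y : R) (a : A), ψ x a + ψ y a = ψ (x + y) a + a * f x y)

variable [Ring R] [NonUnitalRing A]

/-- The obstruction component `ξ`. -/
def xiObs (f : R → R → A) (x y z : R) : A :=
  f y z - f (x + y) z + f x (y + z) - f x y

/-- The obstruction component `η`. -/
def etaObs (f : R → R → A) (x y : R) : A :=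
  f x y - f y x

/-- The obstruction component `α`. -/
def alphaObs (φ ψ : R → AddMonoid.End A) (g : R → R → A) (x y z : R) : A :=
  φ x (g y z) - g (x * y) z + g x (y * z) - ψ z (g x y)

/-- The obstruction component `λ`. -/
def lambdaObs (φ : R → AddMonoid.End A) (f g : R → R → A) (x y z : R) : A :=
  φ x (f y z) - f (x * y) (x * z) + g x (y + z) - g x y - g x z

/-- The obstruction component `ρ`. -/
def rhoObs (ψ : R → AddMonoid.End A) (f g : R → R → A) (x y z : R) : A :=
  ψ z (f x y) - f (x * z) (y * z) + g (x + y) z - g x z - g y z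

/-- The obstruction component
`α(x,y,z) = φ_x(g(y,z)) − g(xy,z) + g(x,yz) − ψ_z(g(x,y))` lies in the bicenter. -/
theorem alpha_mem_bicenter
    [Nontrivial R] (φ ψ : R → AddMonoid.End A) (f g : R → R → A)
    (h : IsPreExtension φ ψ f g) :
    ∀ x y z : R, alphaObs φ ψ g x y z ∈ bicenter A := by
  obtain ⟨h1,h2,h3,h4,h5,h6,h7,h8,h9,h10,h11⟩ := h
  intro x y z
  simp only [bicenter, Set.mem_setOf_eq]
  intro b
  constructor
  · have A1 : φ x (φ y (φ z b)) = φ (x*(y*z)) b + g x (y*z) * b + φ x (g y z) * b := by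
      rw [h8 y z b, map_add, h8 x (y*z) b, h4 x (g y z) b]
    have A2 : φ x (φ y (φ z b)) = φ (x*y*z) b + g (x*y) z * b + ψ z (g x y) * b := by
      rw [h8 x y (φ z b), h8 (x*y) z b, h3 z (g x y) b]
    calc alphaObs φ ψ g x y z * b
        = (φ (x*(y*z)) b + g x (y*z) * b + φ x (g y z) * b)
          - (φ (x*y*z) b + g (x*y) z * b + ψ z (g x y) * b) := by
          simp only [alphaObs, sub_mul, add_mul, mul_assoc]
          abel
      _ = 0 := by rw [← A1, ← A2, sub_self]
  · have B1 : ψ z (ψ y (ψ x b)) = ψ (x*(y*z)) b + b * g x (y*z) + b * φ x (g y z) := by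
      rw [h9 y z (ψ x b), h9 x (y*z) b, h6 x (g y z) b]
    have B2 : ψ z (ψ y (ψ x b)) = ψ (x*y*z) b + b * g (x*y) z + b * ψ z (g x y) := by
      rw [h9 x y b, map_add, h9 (x*y) z b, h5 z (g x y) b]
    calc b * alphaObs φ ψ g x y z
        = (ψ (x*(y*z)) b + b * g x (y*z) + b * φ x (g y z))
          - (ψ (x*y*z) b + b * g (x*y) z + b * ψ z (g x y)) := by
          simp only [alphaObs, mul_sub, mul_add, mul_assoc]
          abel
      _ = 0 := by rw [← B1, ← B2, sub_self]
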